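/- Assume S ⊆ ℝ, inf_{x,y∈S} κ(x,y) > 0, κ(x,y) is non-decreasing in each argument, κ(x,y) ≤ c₁·T_κ[1](x)·T_κ[1](y) for all x,y ∈ S and some constant c₁ > 0, ∫_S e^{a ψ(x)} dμ(x) < ∞ for some a > 0 where ψ(x) = (∫_S κ(x,y)² dμ(y))^{1/2}, and ‖T_κ‖ < 1. Then there exist z > 1 and a μ-a.e. finite measurable function f ≥ 1 satisfying f = z·e^{T_κ[f−1]} μ-a.e. -/

import Mathlib

open MeasureTheory Filter
open scoped ENNReal

/-- Extended exponential on `ℝ≥0∞`, with `eexp ⊤ = ⊤`. -/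
noncomputable def eexp (t : ℝ≥0∞) : ℝ≥0∞ :=
  if t = ⊤ then ⊤ else ENNReal.ofReal (Real.exp t.toReal)

/-- The nonlinear operator `Φ_{z,κ}[f](x) = z·exp(T_κ[f-1](x))`. -/
noncomputable def Phi {S : Type*} [MeasurableSpace S] (μ : Measure S)
    (κ : S → S → ℝ) (z : ℝ) (f : S → ℝ≥0∞) : S → ℝ≥0∞ :=
  fun x => ENNReal.ofReal z * eexp (∫⁻ y, ENNReal.ofReal (κ x y) * (f y - 1) ∂μ)

/-- The `L²(μ)` operator norm of the integral operator `T_κ`, as a supremum over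
nonnegative functions of `L²`-norm at most one. -/
noncomputable def opNorm {S : Type*} [MeasurableSpace S] (μ : Measure S)
    (κ : S → S → ℝ) : ℝ≥0∞ :=
  ⨆ (f : S → ℝ≥0∞) (_ : Measurable f) (_ : (∫⁻ x, f x ^ 2 ∂μ) ^ ((1 : ℝ) / 2) ≤ 1),
    (∫⁻ x, (∫⁻ y, ENNReal.ofReal (κ x y) * f y ∂μ) ^ 2 ∂μ) ^ ((1 : ℝ) / 2)

lemma eexp_ne_top {t : ℝ≥0∞} (ht : t ≠ ⊤) : eexp t = ENNReal.ofReal (Real.exp t.toReal) := by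
  simp [eexp, ht]

lemma eexp_top : eexp ⊤ = ⊤ := by simp [eexp]

lemma eexp_zero : eexp 0 = 1 := by simp [eexp]

lemma eexp_mono : Monotone eexp := by
  intro s t hst
  rcases eq_or_ne t ⊤ with rfl | ht
  · simp [eexp_top]
  · have hs : s ≠ ⊤ := fun h => ht (top_le_iff.mp (h ▸ hst))
    rw [eexp_ne_top hs, eexp_ne_top ht]
    exact ENNReal.ofReal_le_ofReal (Real.exp_le_exp.2 (ENNReal.toReal_mono ht hst))

lemma le_eexp (t : ℝ≥0∞) : t ≤ eexp t := by
  rcases eq_or_ne t ⊤ with rfl | ht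
  · simp [eexp_top]
  · rw [eexp_ne_top ht]
    calc t = ENNReal.ofReal t.toReal := (ENNReal.ofReal_toReal ht).symm
    _ ≤ _ := ENNReal.ofReal_le_ofReal (by
        have := Real.add_one_le_exp t.toReal
        have h0 : (0:ℝ) ≤ t.toReal := ENNReal.toReal_nonneg
        linarith)

lemma measurable_eexp : Measurable eexp := by
  have : eexp = fun t => Set.piecewise {⊤} (fun _ => (⊤:ℝ≥0∞))
      (fun t => ENNReal.ofReal (Real.exp t.toReal)) t := by
    funext t; by_cases ht : t = ⊤ <;> simp [eexp, ht]
  rw [this]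
  exact Measurable.piecewise (measurableSet_singleton _) measurable_const
    (ENNReal.measurable_ofReal.comp (Real.measurable_exp.comp ENNReal.measurable_toReal))

lemma eexp_iSup {t : ℕ → ℝ≥0∞} (hmono : Monotone t) : eexp (⨆ n, t n) = ⨆ n, eexp (t n) := by
  rcases eq_or_ne (⨆ n, t n) ⊤ with htop | hfin
  · rw [htop, eexp_top]
    refine (top_unique ?_).symm
    calc (⊤:ℝ≥0∞) = ⨆ n, t n := htop.symm
    _ ≤ ⨆ n, eexp (t n) := iSup_mono fun n => le_eexp _
  · have htn : ∀ n, t n ≠ ⊤ := fun n h => hfin (top_le_iff.mp (h ▸ le_iSup t n))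
    refine (iSup_eq_of_tendsto (fun m n h => eexp_mono (hmono h)) ?_).symm
    have h1 : Tendsto t atTop (nhds (⨆ n, t n)) := tendsto_atTop_iSup hmono
    have h2 : Tendsto (fun n => ENNReal.ofReal (Real.exp (t n).toReal)) atTop
        (nhds (ENNReal.ofReal (Real.exp (⨆ n, t n).toReal))) :=
      (ENNReal.continuous_ofReal.tendsto _).comp
        ((Real.continuous_exp.tendsto _).comp ((ENNReal.tendsto_toReal hfin).comp h1))
    rw [eexp_ne_top hfin]
    refine h2.congr fun n => (eexp_ne_top (htn n)).symm

lemma eexp_sq (t : ℝ≥0∞) : eexp t ^ (2:ℕ) = eexp (2 * t) := by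
  rcases eq_or_ne t ⊤ with rfl | ht
  · simp [eexp_top]
  · have h2 : 2 * t ≠ ⊤ := ENNReal.mul_ne_top (by norm_num) ht
    rw [eexp_ne_top ht, eexp_ne_top h2, ← ENNReal.ofReal_pow (Real.exp_nonneg _)]
    congr 1
    rw [← Real.exp_nat_mul]
    congr 1
    rw [ENNReal.toReal_mul]
    norm_num

lemma real_exp_key {z s : ℝ} (hz : 1 ≤ z) (hs : 0 ≤ s) :
    z * Real.exp s - 1 ≤ (z - 1) * Real.exp s + (s + s ^ 2 * Real.exp s) := by
  have h1 : Real.exp s - 1 ≤ s * Real.exp s := by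
    have h := Real.add_one_le_exp (-s)
    have hpos := Real.exp_pos s
    have h2 : (-s + 1) * Real.exp s ≤ Real.exp (-s) * Real.exp s :=
      mul_le_mul_of_nonneg_right h hpos.le
    rw [← Real.exp_add] at h2
    simp at h2
    nlinarith
  nlinarith [Real.exp_pos s, mul_le_mul_of_nonneg_left h1 hs]

lemma ennreal_key {z : ℝ} (hz : 1 ≤ z) {t : ℝ≥0∞} (ht : t ≠ ⊤) :
    ENNReal.ofReal z * eexp t - 1 ≤
      ENNReal.ofReal (z - 1) * eexp t + (t + t ^ 2 * eexp t) := by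
  set s := t.toReal with hs
  have hs0 : 0 ≤ s := ENNReal.toReal_nonneg
  have hts : t = ENNReal.ofReal s := (ENNReal.ofReal_toReal ht).symm
  rw [eexp_ne_top ht]
  calc ENNReal.ofReal z * ENNReal.ofReal (Real.exp s) - 1
      = ENNReal.ofReal (z * Real.exp s - 1) := by
        rw [← ENNReal.ofReal_mul (by linarith), ← ENNReal.ofReal_one,
          ← ENNReal.ofReal_sub _ (by norm_num)]
    _ ≤ ENNReal.ofReal ((z - 1) * Real.exp s + (s + s ^ 2 * Real.exp s)) :=
        ENNReal.ofReal_le_ofReal (real_exp_key hz hs0)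
    _ = _ := by
        rw [ENNReal.ofReal_add (mul_nonneg (by linarith) (Real.exp_pos s).le) (by positivity),
          ENNReal.ofReal_mul (by linarith), ENNReal.ofReal_add hs0 (by positivity),
          ENNReal.ofReal_mul (by positivity), ← hts, ENNReal.ofReal_pow hs0, ← hts]

lemma pow_half_aux (c : ℝ≥0∞) : (c ^ (2:ℕ)) ^ ((1:ℝ)/2) = c := by
  rw [← ENNReal.rpow_natCast c 2, ← ENNReal.rpow_mul]
  norm_num

lemma half_pow_aux (X : ℝ≥0∞) : (X ^ ((1:ℝ)/2)) ^ (2:ℕ) = X := by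
  rw [← ENNReal.rpow_natCast, ← ENNReal.rpow_mul]
  norm_num

lemma nrm_mono_aux {α} [MeasurableSpace α] (μ : Measure α) {u v : α → ℝ≥0∞} (h : ∀ x, u x ≤ v x) :
    (∫⁻ x, u x ^ 2 ∂μ) ^ ((1:ℝ)/2) ≤ (∫⁻ x, v x ^ 2 ∂μ) ^ ((1:ℝ)/2) :=
  ENNReal.rpow_le_rpow (lintegral_mono fun x => pow_le_pow_left' (h x) 2) (by norm_num)

lemma nrm_add_le_aux {α} [MeasurableSpace α] (μ : Measure α) {u v : α → ℝ≥0∞}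
    (hu : Measurable u) (hv : Measurable v) :
    (∫⁻ x, (u x + v x) ^ 2 ∂μ) ^ ((1:ℝ)/2) ≤
      (∫⁻ x, u x ^ 2 ∂μ) ^ ((1:ℝ)/2) + (∫⁻ x, v x ^ 2 ∂μ) ^ ((1:ℝ)/2) := by
  have h := ENNReal.lintegral_Lp_add_le hu.aemeasurable hv.aemeasurable (p := 2) (μ := μ) one_le_two
  simp only [Pi.add_apply] at h
  have h2 : ∀ w : ℝ≥0∞, w ^ (2:ℝ) = w ^ (2:ℕ) := fun w => by
    rw [← ENNReal.rpow_natCast w 2]; norm_num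
  simp only [h2] at h
  convert h using 2 <;> norm_num

lemma nrm_const_mul_aux {α} [MeasurableSpace α] (μ : Measure α) (c : ℝ≥0∞) {u : α → ℝ≥0∞}
    (hu : Measurable u) :
    (∫⁻ x, (c * u x) ^ 2 ∂μ) ^ ((1:ℝ)/2) = c * (∫⁻ x, u x ^ 2 ∂μ) ^ ((1:ℝ)/2) := by
  have h : ∀ x, (c * u x) ^ 2 = c ^ 2 * u x ^ 2 := fun x => mul_pow c (u x) 2
  simp only [h]
  rw [lintegral_const_mul _ (hu.pow_const 2),
    ENNReal.mul_rpow_of_nonneg _ _ (by norm_num : (0:ℝ) ≤ 1/2), pow_half_aux]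

lemma iSup_sq_aux {u : ℕ → ℝ≥0∞} (h : Monotone u) : (⨆ n, u n) ^ (2:ℕ) = ⨆ n, u n ^ (2:ℕ) := by
  refine le_antisymm ?_ (iSup_le fun n => pow_le_pow_left' (le_iSup u n) 2)
  rw [pow_two, ENNReal.iSup_mul]
  refine iSup_le fun n => ?_
  rw [ENNReal.mul_iSup]
  refine iSup_le fun m => le_iSup_of_le (max n m) ?_
  rw [pow_two]
  exact mul_le_mul' (h (le_max_left n m)) (h (le_max_right n m))

set_option maxHeartbeats 2000000 in
theorem stmt7 (S : Set ℝ) (μ : Measure S) [IsProbabilityMeasure μ]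
    (κ : S → S → ℝ) (hκmeas : Measurable (Function.uncurry κ))
    (hκsymm : ∀ x y, κ x y = κ y x)
    (hκinf : ∃ b : ℝ, 0 < b ∧ ∀ x y, b ≤ κ x y)
    (hmono₁ : ∀ x x' y : S, (x : ℝ) ≤ (x' : ℝ) → κ x y ≤ κ x' y)
    (hmono₂ : ∀ x y y' : S, (y : ℝ) ≤ (y' : ℝ) → κ x y ≤ κ x y')
    (c₁ : ℝ) (hc₁ : 0 < c₁)
    (hTT : ∀ x y, κ x y ≤ c₁ * (∫ y', κ x y' ∂μ) * (∫ y', κ y y' ∂μ))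
    (hκ2 : ∀ x, Integrable (fun y => κ x y ^ 2) μ)
    (ψ : S → ℝ) (hψ : ∀ x, ψ x = Real.sqrt (∫ y, κ x y ^ 2 ∂μ))
    (a : ℝ) (ha : 0 < a)
    (hexp : Integrable (fun x => Real.exp (a * ψ x)) μ)
    (hnorm : opNorm μ κ < 1) :
    ∃ z : ℝ, 1 < z ∧ ∃ f : S → ℝ≥0∞, Measurable f ∧ (∀ x, 1 ≤ f x) ∧
      (∀ᵐ x ∂μ, f x ≠ ⊤) ∧ (∀ᵐ x ∂μ, Phi μ κ z f x = f x) := by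
  classical
  obtain ⟨b, hb, hbκ⟩ := hκinf
  have hκ0 : ∀ x y, 0 ≤ κ x y := fun x y => hb.le.trans (hbκ x y)
  set K : S → S → ℝ≥0∞ := fun x y => ENNReal.ofReal (κ x y) with hKdef
  have hKmeas : Measurable fun p : S × S => K p.1 p.2 :=
    ENNReal.measurable_ofReal.comp hκmeas
  have hKmeas1 : ∀ x, Measurable fun y => K x y :=
    fun x => hKmeas.comp (measurable_prodMk_left)
  -- ψ facts
  have hψ0 : ∀ x, 0 ≤ ψ x := fun x => (hψ x) ▸ Real.sqrt_nonneg _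
  have hψmeas : Measurable ψ := by
    have hint : Measurable fun x => ∫ y, κ x y ^ 2 ∂μ := by
      have hsm : StronglyMeasurable fun p : S × S => κ p.1 p.2 ^ 2 :=
        (hκmeas.pow_const 2).stronglyMeasurable
      exact hsm.integral_prod_right'.measurable
    have hψeq : ψ = fun x => Real.sqrt (∫ y, κ x y ^ 2 ∂μ) := funext hψ
    rw [hψeq]
    exact Real.continuous_sqrt.measurable.comp hint
  set Ψ : S → ℝ≥0∞ := fun x => ENNReal.ofReal (ψ x) with hΨdef
  have hΨmeas : Measurable Ψ := ENNReal.measurable_ofReal.comp hψmeas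
  have hΨsq : ∀ x, (∫⁻ y, K x y ^ 2 ∂μ) = Ψ x ^ 2 := by
    intro x
    have h1 : ∀ y, K x y ^ 2 = ENNReal.ofReal (κ x y ^ 2) := fun y =>
      (ENNReal.ofReal_pow (hκ0 x y) 2).symm
    simp only [h1]
    rw [← ofReal_integral_eq_lintegral_ofReal (hκ2 x)
      (Eventually.of_forall fun y => sq_nonneg _)]
    show ENNReal.ofReal _ = ENNReal.ofReal (ψ x) ^ 2
    rw [hψ x, ← ENNReal.ofReal_pow (Real.sqrt_nonneg _),
      Real.sq_sqrt (integral_nonneg fun y => sq_nonneg _)]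
  -- operator norm facts
  set N := opNorm μ κ with hNdef
  have hNtop : N ≠ ⊤ := (hnorm.trans (by norm_num)).ne
  set ν := N.toReal with hνdef
  have hν0 : 0 ≤ ν := ENNReal.toReal_nonneg
  have hν1 : ν < 1 := by
    have := (ENNReal.toReal_lt_toReal hNtop (by norm_num : (1:ℝ≥0∞) ≠ ⊤)).2 hnorm
    simpa using this
  have hNν : N = ENNReal.ofReal ν := by
    rw [hνdef, ENNReal.ofReal_toReal hNtop]
  -- operator bound
  have Tmeas : ∀ g : S → ℝ≥0∞, Measurable g →
      Measurable fun x => ∫⁻ y, K x y * g y ∂μ := fun g hg =>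
    Measurable.lintegral_prod_right' (hKmeas.mul (hg.comp measurable_snd))
  have Tbound : ∀ g : S → ℝ≥0∞, Measurable g → (∫⁻ x, g x ^ 2 ∂μ) ^ ((1:ℝ)/2) ≠ ⊤ →
      (∫⁻ x, (∫⁻ y, K x y * g y ∂μ) ^ 2 ∂μ) ^ ((1:ℝ)/2) ≤
        N * (∫⁻ x, g x ^ 2 ∂μ) ^ ((1:ℝ)/2) := by
    intro g hg hgfin
    set G := ∫⁻ x, g x ^ 2 ∂μ with hGdef
    set c := G ^ ((1:ℝ)/2) with hcdef
    rcases eq_or_ne c 0 with hc0 | hc0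
    · have hG0 : G = 0 := by
        rcases (ENNReal.rpow_eq_zero_iff.mp hc0) with ⟨h, _⟩ | ⟨_, h⟩
        · exact h
        · norm_num at h
      have hgz : ∀ᵐ x ∂μ, g x ^ 2 = 0 := (lintegral_eq_zero_iff (hg.pow_const 2)).mp hG0
      have hgz' : ∀ᵐ x ∂μ, g x = 0 := by
        filter_upwards [hgz] with x hx
        exact pow_eq_zero_iff (by norm_num) |>.mp hx
      have hT0 : ∀ x, ∫⁻ y, K x y * g y ∂μ = 0 := by
        intro x
        rw [lintegral_eq_zero_iff (f := fun y => K x y * g y) ((hKmeas1 x).mul hg)]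
        filter_upwards [hgz'] with y hy
        simp [hy]
      simp only [hT0]
      simp
    · have hctop : c ≠ ⊤ := hgfin
      set g' : S → ℝ≥0∞ := fun y => c⁻¹ * g y with hg'def
      have hg'meas : Measurable g' := measurable_const.mul hg
      have hcsq : c ^ (2:ℕ) = G := by
        rw [hcdef, ← ENNReal.rpow_natCast, ← ENNReal.rpow_mul]
        norm_num
      have hg'norm : (∫⁻ x, g' x ^ 2 ∂μ) ^ ((1:ℝ)/2) ≤ 1 := by
        have hp : ∀ x, g' x ^ 2 = c⁻¹ ^ 2 * g x ^ 2 := fun x => mul_pow _ _ 2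
        simp only [hp]
        rw [lintegral_const_mul _ (hg.pow_const 2), ← hGdef]
        have h1 : c⁻¹ ^ 2 * G = 1 := by
          rw [← hcsq, ← mul_pow, ENNReal.inv_mul_cancel hc0 hctop, one_pow]
        rw [h1, ENNReal.one_rpow]
      have hle : (∫⁻ x, (∫⁻ y, K x y * g' y ∂μ) ^ 2 ∂μ) ^ ((1:ℝ)/2) ≤ N := by
        rw [hNdef, opNorm]
        exact le_iSup_of_le g' (le_iSup_of_le hg'meas (le_iSup_of_le hg'norm (le_refl _)))
      have hTg : ∀ x, (∫⁻ y, K x y * g y ∂μ) = c * ∫⁻ y, K x y * g' y ∂μ := by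
        intro x
        rw [← lintegral_const_mul c (f := fun y => K x y * g' y) ((hKmeas1 x).mul hg'meas)]
        refine lintegral_congr fun y => ?_
        show K x y * g y = c * (K x y * (c⁻¹ * g y))
        rw [show c * (K x y * (c⁻¹ * g y)) = (c * c⁻¹) * (K x y * g y) by ring,
          ENNReal.mul_inv_cancel hc0 hctop, one_mul]
      calc (∫⁻ x, (∫⁻ y, K x y * g y ∂μ) ^ 2 ∂μ) ^ ((1:ℝ)/2)
          = (∫⁻ x, (c * ∫⁻ y, K x y * g' y ∂μ) ^ 2 ∂μ) ^ ((1:ℝ)/2) := by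
            congr 1
            exact lintegral_congr fun x => by rw [hTg x]
        _ = c * (∫⁻ x, (∫⁻ y, K x y * g' y ∂μ) ^ 2 ∂μ) ^ ((1:ℝ)/2) :=
            nrm_const_mul_aux μ c (Tmeas g' hg'meas)
        _ ≤ c * N := mul_le_mul_right hle c
        _ = N * c := mul_comm _ _
  -- Cauchy-Schwarz
  have CS : ∀ (g : S → ℝ≥0∞), Measurable g → ∀ x,
      (∫⁻ y, K x y * g y ∂μ) ≤ Ψ x * (∫⁻ x, g x ^ 2 ∂μ) ^ ((1:ℝ)/2) := by
    intro g hg x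
    have hconj : (2:ℝ).HolderConjugate 2 := Real.HolderConjugate.two_two
    have h := ENNReal.lintegral_mul_le_Lp_mul_Lq μ hconj
      (hKmeas1 x).aemeasurable hg.aemeasurable
    simp only [Pi.mul_apply] at h
    have h2 : ∀ w : ℝ≥0∞, w ^ (2:ℝ) = w ^ (2:ℕ) := fun w => by
      rw [← ENNReal.rpow_natCast w 2]; norm_num
    simp only [h2] at h
    rw [hΨsq x, pow_half_aux] at h
    exact h
  -- constants
  set A := ∫⁻ x, eexp (ENNReal.ofReal (a * ψ x)) ∂μ with hAdef
  have hA : A ≠ ⊤ := by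
    have h1 : ∀ x : S, eexp (ENNReal.ofReal (a * ψ x)) = ENNReal.ofReal (Real.exp (a * ψ x)) :=
      fun x => by
        rw [eexp_ne_top ENNReal.ofReal_ne_top,
          ENNReal.toReal_ofReal (mul_nonneg ha.le (hψ0 x))]
    rw [hAdef]
    simp only [h1]
    rw [← ofReal_integral_eq_lintegral_ofReal hexp
      (Eventually.of_forall fun x => (Real.exp_pos _).le)]
    exact ENNReal.ofReal_ne_top
  set C' : ℝ := (8/a)^4 with hC'def
  have hC'key : ∀ s : ℝ, 0 ≤ s → s^4 * Real.exp ((a/2) * s) ≤ C' * Real.exp (a * s) := by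
    intro s hs
    have h8 : (0:ℝ) < 8/a := by positivity
    have h1 : s ≤ (8/a) * Real.exp ((a/8)*s) := by
      have h := Real.add_one_le_exp ((a/8)*s)
      have h2 : (a/8)*s ≤ Real.exp ((a/8)*s) := by nlinarith
      calc s = (8/a) * ((a/8)*s) := by field_simp
      _ ≤ (8/a) * Real.exp ((a/8)*s) := mul_le_mul_of_nonneg_left h2 h8.le
    have h4 : s^4 ≤ C' * Real.exp ((a/8)*s)^4 := by
      calc s^4 ≤ ((8/a) * Real.exp ((a/8)*s))^4 := by
            apply pow_le_pow_left₀ hs h1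
      _ = C' * Real.exp ((a/8)*s)^4 := by rw [hC'def]; ring
    have h5 : Real.exp ((a/8)*s)^4 = Real.exp ((a/2)*s) := by
      rw [← Real.exp_nat_mul]
      congr 1
      push_cast
      ring
    rw [h5] at h4
    have h6 : Real.exp ((a/2)*s) * Real.exp ((a/2)*s) = Real.exp (a*s) := by
      rw [← Real.exp_add]; congr 1; ring
    calc s^4 * Real.exp ((a/2)*s)
        ≤ C' * Real.exp ((a/2)*s) * Real.exp ((a/2)*s) :=
          mul_le_mul_of_nonneg_right h4 (Real.exp_pos ((a/2)*s)).le
      _ = C' * Real.exp (a*s) := by rw [mul_assoc, h6]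
  set E₀ := A ^ ((1:ℝ)/2) with hE₀def
  set D₀ := (ENNReal.ofReal C' * A) ^ ((1:ℝ)/2) with hD₀def
  have hE₀top : E₀ ≠ ⊤ := ENNReal.rpow_ne_top_of_nonneg (by norm_num) hA
  have hD₀top : D₀ ≠ ⊤ :=
    ENNReal.rpow_ne_top_of_nonneg (by norm_num) (ENNReal.mul_ne_top ENNReal.ofReal_ne_top hA)
  set e₀ := E₀.toReal with he₀def
  set d₀ := D₀.toReal with hd₀def
  have he₀0 : 0 ≤ e₀ := ENNReal.toReal_nonneg
  have hd₀0 : 0 ≤ d₀ := ENNReal.toReal_nonneg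
  set r : ℝ := min (a/4) ((1-ν)/(2*(d₀+1))) with hrdef
  have hr0 : 0 < r := lt_min (by linarith) (div_pos (by linarith) (by positivity))
  have hra : r ≤ a/4 := min_le_left _ _
  have hrd : r ≤ (1-ν)/(2*(d₀+1)) := min_le_right _ _
  set R := ENNReal.ofReal r with hRdef
  set z : ℝ := 1 + min 1 ((1-ν)*r/(2*(e₀+1))) with hzdef
  have hz1 : 1 < z := by
    have h : 0 < min 1 ((1-ν)*r/(2*(e₀+1))) := lt_min one_pos (div_pos (mul_pos (by linarith) hr0) (by positivity))
    rw [hzdef]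
    exact lt_add_of_pos_right 1 h
  have hzsub : z - 1 ≤ (1-ν)*r/(2*(e₀+1)) := by
    have := min_le_right 1 ((1-ν)*r/(2*(e₀+1))); linarith
  -- main arithmetic
  have hz0' : (0:ℝ) ≤ z - 1 := by linarith
  have main_arith : ENNReal.ofReal (z-1) * E₀ + (N * R + R^2 * D₀) ≤ R := by
    have hz0 : (0:ℝ) ≤ z - 1 := by linarith
    have hE : E₀ = ENNReal.ofReal e₀ := (ENNReal.ofReal_toReal hE₀top).symm
    have hD : D₀ = ENNReal.ofReal d₀ := (ENNReal.ofReal_toReal hD₀top).symm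
    have hR2 : R^2 = ENNReal.ofReal (r^2) := by
      rw [hRdef, ← ENNReal.ofReal_pow hr0.le]
    rw [hE, hD, hNν, hR2, hRdef, ← ENNReal.ofReal_mul hz0, ← ENNReal.ofReal_mul hν0,
      ← ENNReal.ofReal_mul (by positivity), ← ENNReal.ofReal_add (by positivity)
        (by positivity), ← ENNReal.ofReal_add (by positivity) (by positivity)]
    apply ENNReal.ofReal_le_ofReal
    rw [le_div_iff₀ (by positivity : (0:ℝ) < 2*(e₀+1))] at hzsub
    rw [le_div_iff₀ (by positivity : (0:ℝ) < 2*(d₀+1))] at hrd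
    have hzz := hz1
    have hrr := hr0
    have hee := he₀0
    have hdd := hd₀0
    have hnn0 := hν0
    have hnn1 := hν1
    clear_value z r e₀ d₀ ν
    have k1 : (z-1)*e₀ ≤ (1-ν)*r/2 := by nlinarith
    have k2 : r^2*d₀ ≤ (1-ν)*r/2 := by nlinarith
    nlinarith
  -- the iteration
  set F : ℕ → S → ℝ≥0∞ :=
    fun n => Nat.rec (fun _ => (1:ℝ≥0∞)) (fun _ fn => Phi μ κ z fn) n with hFdef
  have hFs : ∀ n, F (n+1) = Phi μ κ z (F n) := fun n => rfl
  have hF0 : ∀ x, F 0 x = 1 := fun _ => rfl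
  have hz1' : (1:ℝ≥0∞) ≤ ENNReal.ofReal z := by
    rw [← ENNReal.ofReal_one]
    exact ENNReal.ofReal_le_ofReal hz1.le
  have hFmeas : ∀ n, Measurable (F n) := by
    intro n
    induction n with
    | zero => exact measurable_const
    | succ n ih =>
      have hTm : Measurable fun x => ∫⁻ y, K x y * (F n y - 1) ∂μ :=
        Tmeas _ (ih.sub measurable_const)
      exact measurable_const.mul (measurable_eexp.comp hTm)
  have hF1 : ∀ n x, 1 ≤ F n x := by
    intro n
    induction n with
    | zero => intro x; exact le_refl _
    | succ n ih =>
      intro x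
      show (1:ℝ≥0∞) ≤ ENNReal.ofReal z * eexp _
      calc (1:ℝ≥0∞) = 1 * 1 := (one_mul 1).symm
      _ ≤ ENNReal.ofReal z * eexp _ := by
          refine mul_le_mul' hz1' ?_
          rw [← eexp_zero]
          exact eexp_mono zero_le
  have hFmono : ∀ n x, F n x ≤ F (n+1) x := by
    intro n
    induction n with
    | zero => intro x; rw [hF0]; exact hF1 1 x
    | succ n ih =>
      intro x
      show Phi μ κ z (F n) x ≤ Phi μ κ z (F (n+1)) x
      refine mul_le_mul_right (eexp_mono (lintegral_mono fun y => ?_)) _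
      exact mul_le_mul_right (tsub_le_tsub_right (ih y) 1) _
  set g : ℕ → S → ℝ≥0∞ := fun n x => F n x - 1 with hgdef
  have hgmeas : ∀ n, Measurable (g n) := fun n => (hFmeas n).sub measurable_const
  have hgmono : ∀ x, Monotone fun n => g n x := fun x =>
    monotone_nat_of_le_succ fun n => tsub_le_tsub_right (hFmono n x) 1
  set W : S → ℝ≥0∞ := fun x => ENNReal.ofReal (r * ψ x) with hWdef
  have hWmeas : Measurable W := ENNReal.measurable_ofReal.comp (hψmeas.const_mul r)
  have hWRψ : ∀ x, W x = R * Ψ x := fun x => ENNReal.ofReal_mul hr0.le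
  have hW2r : ∀ x, 2 * W x = ENNReal.ofReal (2 * (r * ψ x)) := fun x => by
    show 2 * ENNReal.ofReal (r * ψ x) = _
    rw [ENNReal.ofReal_mul (by norm_num : (0:ℝ) ≤ 2), ENNReal.ofReal_ofNat]
  -- bound on ∫ eexp(W)²
  have hE₀bound : (∫⁻ x, eexp (W x) ^ 2 ∂μ) ^ ((1:ℝ)/2) ≤ E₀ := by
    rw [hE₀def, hAdef]
    refine ENNReal.rpow_le_rpow (lintegral_mono fun x => ?_) (by norm_num)
    rw [eexp_sq, hW2r x]
    refine eexp_mono (ENNReal.ofReal_le_ofReal ?_)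
    have h1 := mul_le_mul_of_nonneg_right hra (hψ0 x)
    have h2 := mul_nonneg ha.le (hψ0 x)
    clear_value r
    linarith
  -- bound on ∫ (Ψ² eexp(W))²
  have hD₀bound : (∫⁻ x, (Ψ x ^ 2 * eexp (W x)) ^ 2 ∂μ) ^ ((1:ℝ)/2) ≤ D₀ := by
    rw [hD₀def, hAdef]
    refine ENNReal.rpow_le_rpow ?_ (by norm_num)
    refine le_trans (lintegral_mono fun x => ?_)
      (le_of_eq (lintegral_const_mul' (ENNReal.ofReal C') _ ENNReal.ofReal_ne_top))
    · show (Ψ x ^ 2 * eexp (W x)) ^ 2 ≤ ENNReal.ofReal C' * eexp (ENNReal.ofReal (a * ψ x))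
      have hψx := hψ0 x
      rw [mul_pow, ← pow_mul, eexp_sq, hW2r x]
      have h1 : eexp (ENNReal.ofReal (2 * (r * ψ x)))
          = ENNReal.ofReal (Real.exp (2 * (r * ψ x))) := by
        rw [eexp_ne_top ENNReal.ofReal_ne_top,
          ENNReal.toReal_ofReal (by positivity)]
      have h2 : eexp (ENNReal.ofReal (a * ψ x))
          = ENNReal.ofReal (Real.exp (a * ψ x)) := by
        rw [eexp_ne_top ENNReal.ofReal_ne_top,
          ENNReal.toReal_ofReal (mul_nonneg ha.le hψx)]
      rw [h1, h2]
      show ENNReal.ofReal (ψ x) ^ 4 * ENNReal.ofReal (Real.exp (2 * (r * ψ x))) ≤ _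
      rw [← ENNReal.ofReal_pow hψx, ← ENNReal.ofReal_mul (by positivity),
        ← ENNReal.ofReal_mul (by positivity)]
      apply ENNReal.ofReal_le_ofReal
      have hstep : ψ x ^ 4 * Real.exp (2 * (r * ψ x)) ≤ ψ x ^ 4 * Real.exp ((a/2) * ψ x) := by
        refine mul_le_mul_of_nonneg_left (Real.exp_le_exp.2 ?_) (by positivity)
        have h3 := mul_le_mul_of_nonneg_right hra (hψ0 x)
        clear_value r
        linarith
      exact le_trans hstep (hC'key (ψ x) hψx)
  -- the inductive norm bound
  have nrm_g : ∀ n, (∫⁻ x, g n x ^ 2 ∂μ) ^ ((1:ℝ)/2) ≤ R := by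
    intro n
    induction n with
    | zero =>
      have h0 : (∫⁻ x, g 0 x ^ 2 ∂μ) = 0 := by
        have hz : ∀ x : S, g 0 x ^ 2 = 0 := fun x => by
          show (F 0 x - 1) ^ 2 = 0
          rw [hF0 x]
          simp
        rw [lintegral_congr hz, lintegral_zero]
      rw [h0, ENNReal.zero_rpow_of_pos (by norm_num)]
      exact zero_le
    | succ n ih =>
      set u2 : S → ℝ≥0∞ := fun x => ∫⁻ y, K x y * g n y ∂μ with hu2def
      have hu2meas : Measurable u2 := Tmeas _ (hgmeas n)
      have hu2W : ∀ x, u2 x ≤ W x := by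
        intro x
        refine le_trans (CS (g n) (hgmeas n) x) ?_
        rw [hWRψ x, mul_comm R (Ψ x)]
        exact mul_le_mul_right ih _
      have hu2ne : ∀ x, u2 x ≠ ⊤ :=
        fun x => (lt_of_le_of_lt (hu2W x) ENNReal.ofReal_lt_top).ne
      set u1 : S → ℝ≥0∞ := fun x => ENNReal.ofReal (z-1) * eexp (W x) with hu1def
      have hu1meas : Measurable u1 := measurable_const.mul (measurable_eexp.comp hWmeas)
      set u3 : S → ℝ≥0∞ := fun x => R^2 * (Ψ x ^ 2 * eexp (W x)) with hu3def
      have hu3meas : Measurable u3 :=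
        measurable_const.mul ((hΨmeas.pow_const 2).mul (measurable_eexp.comp hWmeas))
      have hptw : ∀ x, g (n+1) x ≤ u1 x + (u2 x + u3 x) := by
        intro x
        have hkey := ennreal_key hz1.le (hu2ne x)
        refine le_trans hkey ?_
        refine add_le_add (mul_le_mul_right (eexp_mono (hu2W x)) _) ?_
        refine add_le_add le_rfl ?_
        have h1 : u2 x ^ 2 * eexp (u2 x) ≤ W x ^ 2 * eexp (W x) :=
          mul_le_mul' (pow_le_pow_left' (hu2W x) 2) (eexp_mono (hu2W x))
        refine le_trans h1 (le_of_eq ?_)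
        show W x ^ 2 * eexp (W x) = R ^ 2 * (Ψ x ^ 2 * eexp (W x))
        rw [hWRψ x, mul_pow, mul_assoc, ← hWRψ x]
      calc (∫⁻ x, g (n+1) x ^ 2 ∂μ) ^ ((1:ℝ)/2)
          ≤ (∫⁻ x, (u1 x + (u2 x + u3 x)) ^ 2 ∂μ) ^ ((1:ℝ)/2) := nrm_mono_aux μ hptw
        _ ≤ (∫⁻ x, u1 x ^ 2 ∂μ) ^ ((1:ℝ)/2)
            + (∫⁻ x, (u2 x + u3 x) ^ 2 ∂μ) ^ ((1:ℝ)/2) :=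
            nrm_add_le_aux μ hu1meas (hu2meas.add hu3meas)
        _ ≤ (∫⁻ x, u1 x ^ 2 ∂μ) ^ ((1:ℝ)/2)
            + ((∫⁻ x, u2 x ^ 2 ∂μ) ^ ((1:ℝ)/2) + (∫⁻ x, u3 x ^ 2 ∂μ) ^ ((1:ℝ)/2)) :=
            add_le_add le_rfl (nrm_add_le_aux μ hu2meas hu3meas)
        _ ≤ ENNReal.ofReal (z-1) * E₀ + (N * R + R^2 * D₀) := by
            refine add_le_add ?_ (add_le_add ?_ ?_)
            · rw [hu1def]
              show (∫⁻ x, (ENNReal.ofReal (z-1) * eexp (W x)) ^ 2 ∂μ) ^ ((1:ℝ)/2) ≤ _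
              rw [nrm_const_mul_aux μ (ENNReal.ofReal (z-1))
                (u := fun x => eexp (W x)) (measurable_eexp.comp hWmeas)]
              exact mul_le_mul_right hE₀bound _
            · refine le_trans (Tbound (g n) (hgmeas n)
                (lt_of_le_of_lt ih ENNReal.ofReal_lt_top).ne) ?_
              exact mul_le_mul_right ih N
            · rw [hu3def]
              show (∫⁻ x, (R^2 * (Ψ x ^ 2 * eexp (W x))) ^ 2 ∂μ) ^ ((1:ℝ)/2) ≤ _
              rw [nrm_const_mul_aux μ (R^2)
                (u := fun x => Ψ x ^ 2 * eexp (W x))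
                ((hΨmeas.pow_const 2).mul (measurable_eexp.comp hWmeas))]
              exact mul_le_mul_right hD₀bound _
        _ ≤ R := main_arith
  -- the limit function
  set flim : S → ℝ≥0∞ := fun x => ⨆ n, F n x with hflimdef
  have hflimmeas : Measurable flim := Measurable.iSup fun n => hFmeas n
  have hflim1 : ∀ x, 1 ≤ flim x := fun x =>
    le_trans (le_of_eq (hF0 x).symm) (le_iSup (fun n => F n x) 0)
  have hsub : ∀ y, flim y - 1 = ⨆ n, g n y := fun y => ENNReal.iSup_sub
  have hfix : ∀ x, Phi μ κ z flim x = flim x := by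
    intro x
    show ENNReal.ofReal z * eexp (∫⁻ y, ENNReal.ofReal (κ x y) * (flim y - 1) ∂μ) = flim x
    have h2 : (∫⁻ y, ENNReal.ofReal (κ x y) * (flim y - 1) ∂μ)
        = ⨆ n, ∫⁻ y, K x y * g n y ∂μ := by
      rw [lintegral_congr fun y => by rw [hsub y, ENNReal.mul_iSup]]
      exact lintegral_iSup (fun n => (hKmeas1 x).mul (hgmeas n))
        (fun n m hnm y => mul_le_mul_right (hgmono y hnm) _)
    have hTmono : Monotone fun n => ∫⁻ y, K x y * g n y ∂μ := fun n m hnm =>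
      lintegral_mono fun y => mul_le_mul_right (hgmono y hnm) _
    rw [h2, eexp_iSup hTmono, ENNReal.mul_iSup]
    have h3 : ∀ n, ENNReal.ofReal z * eexp (∫⁻ y, K x y * g n y ∂μ) = F (n+1) x :=
      fun n => rfl
    refine le_antisymm (iSup_le fun n => ?_) (iSup_le fun n => ?_)
    · rw [h3 n]
      exact le_iSup (fun m => F m x) (n+1)
    · refine le_trans (hFmono n x) ?_
      rw [← h3 n]
      exact le_iSup (fun m => ENNReal.ofReal z * eexp (∫⁻ y, K x y * g m y ∂μ)) n
  -- finiteness
  have hfin : ∀ᵐ x ∂μ, flim x ≠ ⊤ := by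
    have hlim : (∫⁻ x, (flim x - 1) ^ 2 ∂μ) ≤ R ^ 2 := by
      have h1 : ∀ x : S, (flim x - 1) ^ 2 = ⨆ n, g n x ^ 2 := fun x => by
        rw [hsub x, iSup_sq_aux (hgmono x)]
      rw [lintegral_congr h1,
        lintegral_iSup (fun n => (hgmeas n).pow_const 2)
          (fun n m hnm x => pow_le_pow_left' (hgmono x hnm) 2)]
      refine iSup_le fun n => ?_
      calc ∫⁻ x, g n x ^ 2 ∂μ
          = ((∫⁻ x, g n x ^ 2 ∂μ) ^ ((1:ℝ)/2)) ^ (2:ℕ) := (half_pow_aux _).symm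
        _ ≤ R ^ 2 := pow_le_pow_left' (nrm_g n) 2
    have h2 : ∀ᵐ x ∂μ, ((flim x - 1) ^ 2 : ℝ≥0∞) < ⊤ := by
      refine ae_lt_top ((hflimmeas.sub measurable_const).pow_const 2) ?_
      exact (lt_of_le_of_lt hlim (by
        rw [hRdef, ← ENNReal.ofReal_pow hr0.le]
        exact ENNReal.ofReal_lt_top)).ne
    filter_upwards [h2] with x hx
    intro hxt
    rw [hxt, ENNReal.sub_eq_top_iff.2 ⟨rfl, by norm_num⟩, pow_two,
      ENNReal.top_mul_top] at hx
    exact lt_irrefl _ hx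
  exact ⟨z, hz1, flim, hflimmeas, hflim1, hfin, Eventually.of_forall hfix⟩
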